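/- Let s > 0 and let φ, φ′ ∈ N′ be such that (φ ∩ Q^M_s(o)) ∪ ∂^{in,*}_o(φ) = (φ′ ∩ Q^M_s(o)) ∪ ∂^{in,*}_o(φ′). Then: (i) h_c(φ, x) = h_c(φ′, x) for all x ∈ (φ ∩ Q^M_s(o)) ∪ ∂^{in,*}_o(φ) with {h_g(φ,x), h_g(φ′,x)} ∩ Q_s(o) ≠ ∅; (ii) ∂^{in,*}_o(φ) = ∂^{in}_o(φ) if and only if ∂^{in,*}_o(φ′) = ∂^{in}_o(φ′); (iii) ∂^{out}_o(φ′) = ∂^{out}_o(φ). -/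

import Mathlib

noncomputable section

namespace Lilypond

open scoped ENNReal

/-- Marked points: a spatial position in `ℝ² = ℝ × ℝ` (with the supremum norm)
together with a mark, which is a direction vector in `ℝ²`. -/
abbrev Pt : Type := (ℝ × ℝ) × (ℝ × ℝ)

def e1 : ℝ × ℝ := (1, 0)
def e2 : ℝ × ℝ := (0, 1)

/-- The mark space `M = {e₁, −e₁, e₂, −e₂}`. -/
def Mset : Set (ℝ × ℝ) := {e1, -e1, e2, -e2}

/-- The Euclidean norm on `ℝ²` (the norm of `ℝ × ℝ` itself is the sup-norm `|·|_∞`). -/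
def eNorm (p : ℝ × ℝ) : ℝ := Real.sqrt (p.1 ^ 2 + p.2 ^ 2)

/-- The eight forbidden directions `{±e₁, ±e₂, (±e₁ ± e₂)/√2}`. -/
def badDirs : Set (ℝ × ℝ) :=
  {e1, -e1, e2, -e2, (Real.sqrt 2)⁻¹ • (e1 + e2), (Real.sqrt 2)⁻¹ • (e1 - e2),
    (Real.sqrt 2)⁻¹ • (-e1 + e2), (Real.sqrt 2)⁻¹ • (-e1 - e2)}

/-- The set of spatial positions of a marked configuration. -/
def pos (φ : Set Pt) : Set (ℝ × ℝ) := Prod.fst '' φ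

/-- `A` contains an (infinite) anisotropic descending chain: there are `b > 0` and pairwise
distinct points `ξ₀, ξ₁, ξ₂, …` of `A` with `|ξ₀ − ξ₁|_∞ ≤ b` and
`|ξ_{i+1} − ξ_i|_∞ < |ξ_i − ξ_{i−1}|_∞` for all `i ≥ 1`. -/
def HasInfDescChain (A : Set (ℝ × ℝ)) : Prop :=
  ∃ b > (0 : ℝ), ∃ ξ : ℕ → ℝ × ℝ, Function.Injective ξ ∧ (∀ i, ξ i ∈ A) ∧
    ‖ξ 0 - ξ 1‖ ≤ b ∧ ∀ i, 1 ≤ i → ‖ξ (i + 1) - ξ i‖ < ‖ξ i - ξ (i - 1)‖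

/-- Local finiteness of a marked configuration. -/
def LocFin (φ : Set Pt) : Prop := ∀ r : ℝ, {x ∈ φ | ‖x.1‖ ≤ r}.Finite

/-- A marked set `φ ⊂ ℝ² × M` is admissible: it is locally finite, all marks lie in `M`,
its set of spatial positions contains no anisotropic descending chain, and
`(ξ − η)/|ξ − η| ∉ {±e₁, ±e₂, (±e₁ ± e₂)/√2}` (Euclidean normalization) for all distinct
`x = (ξ,v), y = (η,w) ∈ φ`. -/
def Admissible (φ : Set Pt) : Prop :=
  LocFin φ ∧ (∀ x ∈ φ, x.2 ∈ Mset) ∧ ¬ HasInfDescChain (pos φ) ∧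
    ∀ x ∈ φ, ∀ y ∈ φ, x ≠ y → (eNorm (x.1 - y.1))⁻¹ • (x.1 - y.1) ∉ badDirs

/-- The half-open growth segment `[ξ, ξ + l·v)`, interpreted as the full ray
`ξ + [0,∞)·v` when `l = ∞`. -/
def seg (ξ v : ℝ × ℝ) (l : ℝ≥0∞) : Set (ℝ × ℝ) :=
  {p | ∃ t : ℝ, 0 ≤ t ∧ ENNReal.ofReal t < l ∧ p = ξ + t • v}

/-- The tip `ξ + f(x)·v` of the (finite) segment grown from `x = (ξ, v)`. -/
def tip (f : Pt → ℝ≥0∞) (x : Pt) : ℝ × ℝ := x.1 + (f x).toReal • x.2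

/-- `y = (η, w)` is a stopping neighbor of `x = (ξ, v)` in `φ` (w.r.t. the growth
function `f`): `y ∈ φ`, `ξ + f(x)v ∈ [η, η + f(y)w)` and `|ξ + f(x)v − η| < f(x)`
(Euclidean norm). -/
def IsStopNbr (φ : Set Pt) (f : Pt → ℝ≥0∞) (x y : Pt) : Prop :=
  y ∈ φ ∧ tip f x ∈ seg y.1 y.2 (f y) ∧ eNorm (tip f x - y.1) < (f x).toReal

/-- `f` is a growth function for `φ`: the half-open segments `[ξ, ξ + f(x)v)` are pairwise
disjoint (hard-core property), every `x ∈ φ` with `f(x) < ∞` has a unique stopping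
neighbor, and (as a normalization identifying `f` with a function on `φ`) `f` vanishes
off `φ`. -/
def IsGrowthFn (φ : Set Pt) (f : Pt → ℝ≥0∞) : Prop :=
  (∀ x ∈ φ, ∀ y ∈ φ, x ≠ y → seg x.1 x.2 (f x) ∩ seg y.1 y.2 (f y) = ∅) ∧
  (∀ x ∈ φ, f x ≠ ⊤ → ∃! y, IsStopNbr φ f x y) ∧
  (∀ x, x ∉ φ → f x = 0)

open Classical in
/-- The growth function `f_φ` of a configuration (chosen by choice; it is unique on
admissible configurations). -/
def growthFn (φ : Set Pt) : Pt → ℝ≥0∞ :=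
  if h : ∃ f, IsGrowthFn φ f then h.choose else fun _ => 0

/-- `N′`: nonempty admissible configurations possessing a growth function which is
finite everywhere on the configuration. -/
def Nprime (φ : Set Pt) : Prop :=
  φ.Nonempty ∧ Admissible φ ∧ (∃ f, IsGrowthFn φ f) ∧ ∀ x ∈ φ, growthFn φ x ≠ ⊤

open Classical in
/-- The combinatorial descendant `h_c(φ, x)`: the (unique) stopping neighbor of `x`
in `φ`. -/
def hc (φ : Set Pt) (x : Pt) : Pt :=
  if h : ∃ y, IsStopNbr φ (growthFn φ) x y then h.choose else x

/-- The geometric descendant `h_g(φ, x) = ξ + f_φ(x)·v`. -/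
def hg (φ : Set Pt) (x : Pt) : ℝ × ℝ := tip (growthFn φ) x

/-- The closed segment `I(φ, x) = [ξ, h_g(φ, x)]`. -/
def I (φ : Set Pt) (x : Pt) : Set (ℝ × ℝ) := segment ℝ x.1 (hg φ x)


/-- The square `Q_s(o) = [−s/2, s/2]²` (a closed sup-norm ball around the origin). -/
def Qb (s : ℝ) : Set (ℝ × ℝ) := {p | ‖p‖ ≤ s / 2}

/-- The marked square `Q^M_s(o) = Q_s(o) × M`. -/
def QbM (s : ℝ) : Set Pt := {x | ‖x.1‖ ≤ s / 2}

/-- `∂^{in,*}_o(φ) = {x ∈ φ ∖ Q^M_s(o) : I(φ, x) ∩ Q_s(o) ≠ ∅}`. -/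
def inStar (s : ℝ) (φ : Set Pt) : Set Pt :=
  {x | x ∈ φ ∧ x ∉ QbM s ∧ (I φ x ∩ Qb s).Nonempty}

/-- `∂^{in}_o(φ) = {x ∈ φ ∖ Q^M_s(o) : h_g(φ, x) ∈ Q_s(o)}`. -/
def inB (s : ℝ) (φ : Set Pt) : Set Pt :=
  {x | x ∈ φ ∧ x ∉ QbM s ∧ hg φ x ∈ Qb s}

/-- `∂^{out}_o(φ) = {x ∈ φ ∩ Q^M_s(o) : h_g(φ, x) ∉ Q_s(o)}`. -/
def outB (s : ℝ) (φ : Set Pt) : Set Pt :=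
  {x | x ∈ φ ∧ x ∈ QbM s ∧ hg φ x ∉ Qb s}

/-! ### Auxiliary lemmas -/

lemma growthFn_isGrowthFn {φ : Set Pt} (h : ∃ f, IsGrowthFn φ f) :
    IsGrowthFn φ (growthFn φ) := by
  rw [growthFn, dif_pos h]; exact h.choose_spec

lemma hc_isStopNbr {φ : Set Pt} {x : Pt} (h : ∃ y, IsStopNbr φ (growthFn φ) x y) :
    IsStopNbr φ (growthFn φ) x (hc φ x) := by
  rw [hc, dif_pos h]; exact h.choose_spec

lemma hc_eq {φ : Set Pt} {x y : Pt} (hu : ∃! z, IsStopNbr φ (growthFn φ) x z)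
    (hy : IsStopNbr φ (growthFn φ) x y) : hc φ x = y :=
  (hu.unique (hc_isStopNbr ⟨y, hy⟩) hy)

lemma mark_norm {v : ℝ × ℝ} (hv : v ∈ Mset) : ‖v‖ = 1 := by
  rcases hv with h | h | h | h <;> subst h <;> simp [e1, e2, Prod.norm_def]

lemma mark_ne_zero {v : ℝ × ℝ} (hv : v ∈ Mset) : v ≠ 0 := by
  intro h
  have := mark_norm hv
  rw [h] at this
  simp at this

lemma eNorm_smul_mark {v : ℝ × ℝ} (hv : v ∈ Mset) {t : ℝ} (ht : 0 ≤ t) :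
    eNorm (t • v) = t := by
  rcases hv with h | h | h | h <;> subst h <;>
    simp [eNorm, e1, e2, Prod.smul_mk, mul_pow, neg_zero, mul_zero, mul_one,
      mul_neg, neg_neg] <;>
    rw [Real.sqrt_sq_eq_abs] <;> exact abs_of_nonneg ht

lemma mem_segment_param {a v : ℝ × ℝ} {b u : ℝ} (h0 : 0 ≤ u) (hub : u ≤ b) :
    a + u • v ∈ segment ℝ a (a + b • v) := by
  rcases eq_or_lt_of_le (h0.trans hub) with hb | hb
  · have hu0 : u = 0 := le_antisymm (hb ▸ hub) h0
    simp only [hu0, zero_smul, add_zero]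
    exact left_mem_segment ℝ a _
  · refine ⟨1 - u / b, u / b, by
      have : u / b ≤ 1 := (div_le_one hb).2 hub
      linarith, div_nonneg h0 (le_of_lt hb), by ring, ?_⟩
    rw [smul_add, smul_smul, div_mul_cancel₀ u hb.ne', sub_smul, one_smul]
    abel

lemma segment_param_of_mem {a v q : ℝ × ℝ} {b : ℝ} (hb : 0 ≤ b)
    (h : q ∈ segment ℝ a (a + b • v)) : ∃ u, 0 ≤ u ∧ u ≤ b ∧ q = a + u • v := by
  obtain ⟨c, d, hc, hd, hcd, rfl⟩ := h
  refine ⟨d * b, by positivity, by nlinarith, ?_⟩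
  have hc1 : c = 1 - d := by linarith
  subst hc1
  rw [smul_add, smul_smul, sub_smul, one_smul]
  abel

lemma norm_seg_le {ξ v : ℝ × ℝ} {a b c r : ℝ} (hac : a ≤ c) (hcb : c ≤ b)
    (ha : ‖ξ + a • v‖ ≤ r) (hb : ‖ξ + b • v‖ ≤ r) : ‖ξ + c • v‖ ≤ r := by
  rcases eq_or_lt_of_le (hac.trans hcb) with h | h
  · have : c = a := le_antisymm (h ▸ hcb) hac
    rwa [this]
  · set θ : ℝ := (c - a) / (b - a) with hθ
    have hba : (0:ℝ) < b - a := by linarith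
    have hθ0 : 0 ≤ θ := div_nonneg (by linarith) hba.le
    have hθ1 : θ ≤ 1 := by
      rw [hθ, div_le_one hba]; linarith
    have hkey : ξ + c • v = (1 - θ) • (ξ + a • v) + θ • (ξ + b • v) := by
      have hcoef : (1 - θ) * a + θ * b = c := by
        field_simp [hθ]
        have hθm : θ * (b - a) = c - a := by rw [hθ]; exact div_mul_cancel₀ _ hba.ne'
        linear_combination hθm
      rw [smul_add, smul_add, smul_smul, smul_smul, ← add_assoc]
      rw [show (1 - θ) • ξ + ((1 - θ) * a) • v + θ • ξ
            = ((1 - θ) • ξ + θ • ξ) + ((1 - θ) * a) • v by abel]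
      rw [← add_smul, sub_add_cancel, one_smul, add_assoc, ← add_smul, hcoef]
    rw [hkey]
    calc ‖(1 - θ) • (ξ + a • v) + θ • (ξ + b • v)‖
        ≤ ‖(1 - θ) • (ξ + a • v)‖ + ‖θ • (ξ + b • v)‖ := norm_add_le _ _
      _ = (1 - θ) * ‖ξ + a • v‖ + θ * ‖ξ + b • v‖ := by
          rw [norm_smul, norm_smul, Real.norm_eq_abs, Real.norm_eq_abs,
            abs_of_nonneg (by linarith : (0:ℝ) ≤ 1 - θ), abs_of_nonneg hθ0]
      _ ≤ (1 - θ) * r + θ * r := by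
          have g1 := mul_le_mul_of_nonneg_left ha (by linarith : (0:ℝ) ≤ 1 - θ)
          have g2 := mul_le_mul_of_nonneg_left hb hθ0
          linarith
      _ = r := by ring

lemma psi_subset {s : ℝ} {φ : Set Pt} : (φ ∩ QbM s) ∪ inStar s φ ⊆ φ := by
  rintro x (⟨hx, _⟩ | hx)
  · exact hx
  · exact hx.1

/-- If `z` is in the square or its segment meets the square, then there is a parameter
`u ∈ [0, f(z)]` at which the segment of `z` is inside the square. -/
lemma exists_lower {s : ℝ} {φ : Set Pt} {z : Pt}
    (hz : z ∈ (φ ∩ QbM s) ∪ inStar s φ) :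
    ∃ u, 0 ≤ u ∧ u ≤ (growthFn φ z).toReal ∧ ‖z.1 + u • z.2‖ ≤ s / 2 := by
  rcases hz with ⟨_, hzQ⟩ | hz
  · exact ⟨0, le_refl _, ENNReal.toReal_nonneg, by have hzQ' : ‖z.1‖ ≤ s / 2 := hzQ; simpa using hzQ'⟩
  · obtain ⟨q, hqI, hqQ⟩ := hz.2.2
    simp only [I, hg, tip] at hqI
    obtain ⟨u, hu0, hub, rfl⟩ := segment_param_of_mem ENNReal.toReal_nonneg hqI
    exact ⟨u, hu0, hub, hqQ⟩

/-- If the segment of `y ∈ φ` strictly covers a point of the square, then `y`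
belongs to the square together with the entering points. -/
lemma mem_psi_of_hit {s : ℝ} {φ : Set Pt} (hφ : Nprime φ) {y : Pt} (hy : y ∈ φ)
    {t : ℝ} (ht0 : 0 ≤ t) (htf : ENNReal.ofReal t < growthFn φ y)
    (hQ : ‖y.1 + t • y.2‖ ≤ s / 2) : y ∈ (φ ∩ QbM s) ∪ inStar s φ := by
  by_cases hyQ : ‖y.1‖ ≤ s / 2
  · exact Or.inl ⟨hy, hyQ⟩
  · refine Or.inr ⟨hy, hyQ, ⟨y.1 + t • y.2, ?_, hQ⟩⟩
    have hfy : growthFn φ y ≠ ⊤ := hφ.2.2.2 y hy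
    have ht : t ≤ (growthFn φ y).toReal :=
      le_of_lt ((ENNReal.ofReal_lt_iff_lt_toReal ht0 hfy).mp htf)
    simp only [I, hg, tip]
    exact mem_segment_param ht0 ht

/-- The key descent step: a discrepancy whose smaller tip is inside the square
produces a strictly smaller discrepancy (with swapped roles) nearby. -/
lemma step_lemma {s : ℝ} {φ φ' : Set Pt} (hφ : Nprime φ) (hφ' : Nprime φ')
    (heq : (φ ∩ QbM s) ∪ inStar s φ = (φ' ∩ QbM s) ∪ inStar s φ')
    {x : Pt} (hxψ : x ∈ (φ ∩ QbM s) ∪ inStar s φ)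
    (hlt : growthFn φ x < growthFn φ' x) (hgQ : hg φ x ∈ Qb s) :
    ∃ y ∈ (φ ∩ QbM s) ∪ inStar s φ,
      growthFn φ' y < growthFn φ y ∧ hg φ' y ∈ Qb s ∧
      min (growthFn φ y) (growthFn φ' y) < min (growthFn φ x) (growthFn φ' x) ∧
      ‖y.1‖ ≤ s / 2 + (min (growthFn φ x) (growthFn φ' x)).toReal := by
  have hf : IsGrowthFn φ (growthFn φ) := growthFn_isGrowthFn hφ.2.2.1
  have hf' : IsGrowthFn φ' (growthFn φ') := growthFn_isGrowthFn hφ'.2.2.1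
  have hxφ : x ∈ φ := psi_subset hxψ
  have hxφ' : x ∈ φ' := psi_subset (heq ▸ hxψ)
  have hfx : growthFn φ x ≠ ⊤ := hφ.2.2.2 x hxφ
  obtain ⟨y, hy, -⟩ := hf.2.1 x hxφ hfx
  obtain ⟨hyφ, htip, henorm⟩ := hy
  simp only [seg, Set.mem_setOf_eq] at htip
  obtain ⟨t, ht0, htlt, htipeq⟩ := htip
  have hyM : y.2 ∈ Mset := hφ.2.1.2.1 y hyφ
  have ht_lt_fx : t < (growthFn φ x).toReal := by
    rwa [htipeq, add_sub_cancel_left, eNorm_smul_mark hyM ht0] at henorm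
  have htQ : ‖y.1 + t • y.2‖ ≤ s / 2 := by
    have : ‖tip (growthFn φ) x‖ ≤ s / 2 := hgQ
    rwa [htipeq] at this
  have hyψ : y ∈ (φ ∩ QbM s) ∪ inStar s φ := mem_psi_of_hit hφ hyφ ht0 htlt htQ
  have hyφ' : y ∈ φ' := psi_subset (heq ▸ hyψ)
  have hxy : x ≠ y := by
    intro h
    subst h
    have h2 : x.1 + (growthFn φ x).toReal • x.2 = x.1 + t • x.2 := htipeq
    have h3 := add_left_cancel h2
    have h4 : ((growthFn φ x).toReal - t) • x.2 = 0 := by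
      rw [sub_smul, h3, sub_self]
    rcases smul_eq_zero.mp h4 with h5 | h5
    · exact absurd (by linarith [sub_eq_zero.mp (by exact_mod_cast h5)] : ¬ t < (growthFn φ x).toReal) (fun hh => hh ht_lt_fx)
    · exact mark_ne_zero (hφ.2.1.2.1 x hxφ) h5
  have hne : ¬ ENNReal.ofReal t < growthFn φ' y := by
    intro hcon
    have h1 : tip (growthFn φ) x ∈ seg y.1 y.2 (growthFn φ' y) := ⟨t, ht0, hcon, htipeq⟩
    have h2 : tip (growthFn φ) x ∈ seg x.1 x.2 (growthFn φ' x) :=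
      ⟨(growthFn φ x).toReal, ENNReal.toReal_nonneg,
        by rw [ENNReal.ofReal_toReal hfx]; exact hlt, rfl⟩
    have hdisj := hf'.1 x hxφ' y hyφ' hxy
    rw [Set.eq_empty_iff_forall_notMem] at hdisj
    exact hdisj _ ⟨h2, h1⟩
  have hle : growthFn φ' y ≤ ENNReal.ofReal t := not_lt.mp hne
  have hlt_y : growthFn φ' y < growthFn φ y := lt_of_le_of_lt hle htlt
  have hfy'r : (growthFn φ' y).toReal ≤ t := ENNReal.toReal_le_of_le_ofReal ht0 hle
  have hg'Q : hg φ' y ∈ Qb s := by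
    obtain ⟨u, hu0, hub, huQ⟩ := exists_lower (s := s) (φ := φ') (heq ▸ hyψ)
    show ‖y.1 + (growthFn φ' y).toReal • y.2‖ ≤ s / 2
    exact norm_seg_le hub hfy'r huQ htQ
  have hofr : ENNReal.ofReal t < growthFn φ x :=
    (ENNReal.ofReal_lt_iff_lt_toReal ht0 hfx).mpr ht_lt_fx
  refine ⟨y, hyψ, hlt_y, hg'Q, ?_, ?_⟩
  · rw [min_eq_left hlt.le]
    exact lt_of_le_of_lt (le_trans (min_le_right _ _) hle) hofr
  · have hnorm1 : ‖y.1‖ ≤ ‖y.1 + t • y.2‖ + ‖t • y.2‖ := by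
      have := norm_sub_le (y.1 + t • y.2) (t • y.2)
      simpa using this
    have hnorm2 : ‖t • y.2‖ = t := by
      rw [norm_smul, mark_norm hyM, Real.norm_eq_abs, abs_of_nonneg ht0, mul_one]
    rw [min_eq_left hlt.le]
    calc ‖y.1‖ ≤ ‖y.1 + t • y.2‖ + ‖t • y.2‖ := hnorm1
      _ ≤ s / 2 + t := by rw [hnorm2]; exact add_le_add htQ le_rfl
      _ ≤ s / 2 + (growthFn φ x).toReal := by linarith

/-- Lemma: the restriction of the lilypond model to a square is
determined by the entering segments.  Let `s > 0` and `φ, φ′ ∈ N′` with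
`(φ ∩ Q^M_s(o)) ∪ ∂^{in,*}_o(φ) = (φ′ ∩ Q^M_s(o)) ∪ ∂^{in,*}_o(φ′)`.  Then:
(i) `h_c(φ, x) = h_c(φ′, x)` for all `x ∈ (φ ∩ Q^M_s(o)) ∪ ∂^{in,*}_o(φ)` with
`{h_g(φ,x), h_g(φ′,x)} ∩ Q_s(o) ≠ ∅`;
(ii) `∂^{in,*}_o(φ) = ∂^{in}_o(φ)` iff `∂^{in,*}_o(φ′) = ∂^{in}_o(φ′)`;
(iii) `∂^{out}_o(φ′) = ∂^{out}_o(φ)`. -/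
theorem boundary_determined (s : ℝ) (hs : 0 < s) (φ φ' : Set Pt)
    (hφ : Nprime φ) (hφ' : Nprime φ')
    (heq : (φ ∩ QbM s) ∪ inStar s φ = (φ' ∩ QbM s) ∪ inStar s φ') :
    (∀ x ∈ (φ ∩ QbM s) ∪ inStar s φ,
        (hg φ x ∈ Qb s ∨ hg φ' x ∈ Qb s) → hc φ x = hc φ' x) ∧
    (inStar s φ = inB s φ ↔ inStar s φ' = inB s φ') ∧
    outB s φ' = outB s φ := by
  have hf : IsGrowthFn φ (growthFn φ) := growthFn_isGrowthFn hφ.2.2.1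
  have hf' : IsGrowthFn φ' (growthFn φ') := growthFn_isGrowthFn hφ'.2.2.1
  -- the two-sided descent step
  have step : ∀ z, z ∈ (φ ∩ QbM s) ∪ inStar s φ →
      ((growthFn φ z < growthFn φ' z ∧ hg φ z ∈ Qb s) ∨
        (growthFn φ' z < growthFn φ z ∧ hg φ' z ∈ Qb s)) →
      ∃ w, w ∈ (φ ∩ QbM s) ∪ inStar s φ ∧
        ((growthFn φ w < growthFn φ' w ∧ hg φ w ∈ Qb s) ∨
          (growthFn φ' w < growthFn φ w ∧ hg φ' w ∈ Qb s)) ∧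
        min (growthFn φ w) (growthFn φ' w) < min (growthFn φ z) (growthFn φ' z) ∧
        ‖w.1‖ ≤ s / 2 + (min (growthFn φ z) (growthFn φ' z)).toReal := by
    rintro z hz (⟨h1, h2⟩ | ⟨h1, h2⟩)
    · obtain ⟨w, hwψ, ha, hb, hc, hd⟩ := step_lemma hφ hφ' heq hz h1 h2
      exact ⟨w, hwψ, Or.inr ⟨ha, hb⟩, hc, hd⟩
    · obtain ⟨w, hwψ, ha, hb, hc, hd⟩ := step_lemma hφ' hφ heq.symm (heq ▸ hz) h1 h2
      refine ⟨w, heq.symm ▸ hwψ, Or.inl ⟨ha, hb⟩, ?_, ?_⟩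
      · rwa [min_comm (growthFn φ' w), min_comm (growthFn φ' z)] at hc
      · rwa [min_comm (growthFn φ' z)] at hd
  -- no discrepancy whose smaller tip lies in the square
  have key : ∀ x ∈ (φ ∩ QbM s) ∪ inStar s φ,
      ¬ ((growthFn φ x < growthFn φ' x ∧ hg φ x ∈ Qb s) ∨
        (growthFn φ' x < growthFn φ x ∧ hg φ' x ∈ Qb s)) := by
    by_contra hcon
    push_neg at hcon
    obtain ⟨x0, hx0ψ, hx0⟩ := hcon
    obtain ⟨y0, hy0ψ, hy0P, hy0lt, hy0n⟩ := step x0 hx0ψ hx0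
    have hmx0top : min (growthFn φ x0) (growthFn φ' x0) ≠ ⊤ :=
      ne_top_of_le_ne_top (hφ.2.2.2 x0 (psi_subset hx0ψ)) (min_le_left _ _)
    set R : ℝ := s / 2 + (min (growthFn φ x0) (growthFn φ' x0)).toReal with hR
    set B : Set Pt := {z | z ∈ (φ ∩ QbM s) ∪ inStar s φ ∧
      ((growthFn φ z < growthFn φ' z ∧ hg φ z ∈ Qb s) ∨
        (growthFn φ' z < growthFn φ z ∧ hg φ' z ∈ Qb s)) ∧
      min (growthFn φ z) (growthFn φ' z) ≤ min (growthFn φ y0) (growthFn φ' y0) ∧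
      ‖z.1‖ ≤ R} with hB
    have hBfin : B.Finite := by
      refine (hφ.2.1.1 R).subset ?_
      rintro z ⟨hz1, -, -, hz4⟩
      exact ⟨psi_subset hz1, hz4⟩
    have hy0B : y0 ∈ B := ⟨hy0ψ, hy0P, le_rfl, hy0n⟩
    obtain ⟨z, hzB, hzmin⟩ := Set.exists_min_image B
      (fun z => min (growthFn φ z) (growthFn φ' z)) hBfin ⟨y0, hy0B⟩
    obtain ⟨hz1, hz2, hz3, hz4⟩ := hzB
    obtain ⟨w, hwψ, hwP, hwlt, hwn⟩ := step z hz1 hz2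
    have hmz : (min (growthFn φ z) (growthFn φ' z)).toReal
        ≤ (min (growthFn φ x0) (growthFn φ' x0)).toReal :=
      ENNReal.toReal_mono hmx0top (le_of_lt (lt_of_le_of_lt hz3 hy0lt))
    have hwB : w ∈ B := by
      refine ⟨hwψ, hwP, le_trans (le_of_lt hwlt) hz3, ?_⟩
      calc ‖w.1‖ ≤ s / 2 + (min (growthFn φ z) (growthFn φ' z)).toReal := hwn
        _ ≤ R := by rw [hR]; linarith
    exact absurd (hzmin w hwB) (not_le.mpr hwlt)
  -- equality of the growth functions at relevant points
  have feq : ∀ x ∈ (φ ∩ QbM s) ∪ inStar s φ,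
      (hg φ x ∈ Qb s ∨ hg φ' x ∈ Qb s) → growthFn φ x = growthFn φ' x := by
    intro x hxψ hQ
    by_contra hne
    have hxφ : x ∈ φ := psi_subset hxψ
    have hxφ' : x ∈ φ' := psi_subset (heq ▸ hxψ)
    rcases lt_or_gt_of_ne hne with h | h
    · have hgQ : hg φ x ∈ Qb s := by
        rcases hQ with h2 | h2
        · exact h2
        · obtain ⟨u, hu0, hub, huQ⟩ := exists_lower (s := s) (φ := φ) hxψ
          have hfxr : (growthFn φ x).toReal ≤ (growthFn φ' x).toReal :=
            ENNReal.toReal_mono (hφ'.2.2.2 x hxφ') (le_of_lt h)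
          exact norm_seg_le hub hfxr huQ h2
      exact key x hxψ (Or.inl ⟨h, hgQ⟩)
    · have hgQ : hg φ' x ∈ Qb s := by
        rcases hQ with h2 | h2
        · obtain ⟨u, hu0, hub, huQ⟩ := exists_lower (s := s) (φ := φ') (heq ▸ hxψ)
          have hfxr : (growthFn φ' x).toReal ≤ (growthFn φ x).toReal :=
            ENNReal.toReal_mono (hφ.2.2.2 x hxφ) (le_of_lt h)
          exact norm_seg_le hub hfxr huQ h2
        · exact h2
      exact key x hxψ (Or.inr ⟨h, hgQ⟩)
  have hgeq : ∀ x ∈ (φ ∩ QbM s) ∪ inStar s φ,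
      (hg φ x ∈ Qb s ∨ hg φ' x ∈ Qb s) → hg φ x = hg φ' x := by
    intro x hxψ hQ
    simp only [hg, tip, feq x hxψ hQ]
  -- the entering sets coincide
  have hStar : inStar s φ = inStar s φ' := by
    ext x
    constructor <;> intro hx
    · have h2 : x ∈ (φ' ∩ QbM s) ∪ inStar s φ' := heq ▸ Or.inr hx
      rcases h2 with ⟨-, hQ⟩ | h2
      · exact absurd hQ hx.2.1
      · exact h2
    · have h2 : x ∈ (φ ∩ QbM s) ∪ inStar s φ := heq.symm ▸ Or.inr hx
      rcases h2 with ⟨-, hQ⟩ | h2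
      · exact absurd hQ hx.2.1
      · exact h2
  have hQM : φ ∩ QbM s = φ' ∩ QbM s := by
    ext x
    constructor <;> intro hx
    · have h2 : x ∈ (φ' ∩ QbM s) ∪ inStar s φ' := heq ▸ Or.inl hx
      rcases h2 with h2 | h2
      · exact h2
      · exact absurd hx.2 h2.2.1
    · have h2 : x ∈ (φ ∩ QbM s) ∪ inStar s φ := heq.symm ▸ Or.inl hx
      rcases h2 with h2 | h2
      · exact h2
      · exact absurd hx.2 h2.2.1
  refine ⟨?_, ?_, ?_⟩
  · -- (i) equality of combinatorial descendants
    intro x hxψ hQ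
    have hxφ : x ∈ φ := psi_subset hxψ
    have hxφ' : x ∈ φ' := psi_subset (heq ▸ hxψ)
    have hfx : growthFn φ x ≠ ⊤ := hφ.2.2.2 x hxφ
    have hfx' : growthFn φ' x ≠ ⊤ := hφ'.2.2.2 x hxφ'
    have hfeq : growthFn φ x = growthFn φ' x := feq x hxψ hQ
    have hex : ∃ y, IsStopNbr φ (growthFn φ) x y := (hf.2.1 x hxφ hfx).exists
    have hy : IsStopNbr φ (growthFn φ) x (hc φ x) := hc_isStopNbr hex
    obtain ⟨hyφ, htip, henorm⟩ := hy
    simp only [seg, Set.mem_setOf_eq] at htip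
    obtain ⟨t, ht0, htlt, htipeq⟩ := htip
    have hyM : (hc φ x).2 ∈ Mset := hφ.2.1.2.1 _ hyφ
    have ht_lt_fx : t < (growthFn φ x).toReal := by
      rwa [htipeq, add_sub_cancel_left, eNorm_smul_mark hyM ht0] at henorm
    have htipQ : ‖tip (growthFn φ) x‖ ≤ s / 2 := by
      rcases hQ with h2 | h2
      · exact h2
      · have := hgeq x hxψ (Or.inr h2)
        show hg φ x ∈ Qb s
        rw [this]; exact h2
    have htQ : ‖(hc φ x).1 + t • (hc φ x).2‖ ≤ s / 2 := by rwa [htipeq] at htipQ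
    have hyψ : hc φ x ∈ (φ ∩ QbM s) ∪ inStar s φ := mem_psi_of_hit hφ hyφ ht0 htlt htQ
    have hyφ' : hc φ x ∈ φ' := psi_subset (heq ▸ hyψ)
    have hcase : ENNReal.ofReal t < growthFn φ' (hc φ x) := by
      by_contra hcon
      have hle : growthFn φ' (hc φ x) ≤ ENNReal.ofReal t := not_lt.mp hcon
      have hlt_y : growthFn φ' (hc φ x) < growthFn φ (hc φ x) := lt_of_le_of_lt hle htlt
      have hfy'r : (growthFn φ' (hc φ x)).toReal ≤ t := ENNReal.toReal_le_of_le_ofReal ht0 hle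
      have hg'Q : hg φ' (hc φ x) ∈ Qb s := by
        obtain ⟨u, hu0, hub, huQ⟩ := exists_lower (s := s) (φ := φ') (heq ▸ hyψ)
        show ‖(hc φ x).1 + (growthFn φ' (hc φ x)).toReal • (hc φ x).2‖ ≤ s / 2
        exact norm_seg_le hub hfy'r huQ htQ
      exact key (hc φ x) hyψ (Or.inr ⟨hlt_y, hg'Q⟩)
    have htipeq' : tip (growthFn φ') x = tip (growthFn φ) x := by
      simp only [tip, ← hfeq]
    have hsn' : IsStopNbr φ' (growthFn φ') x (hc φ x) := by
      refine ⟨hyφ', ⟨t, ht0, hcase, ?_⟩, ?_⟩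
      · rw [htipeq']; exact htipeq
      · rw [htipeq', ← hfeq]
        exact henorm
    exact (hc_eq (hf'.2.1 x hxφ' hfx') hsn').symm
  · -- (ii)
    have hBsub : ∀ χ : Set Pt, inB s χ ⊆ inStar s χ := by
      intro χ x hx
      exact ⟨hx.1, hx.2.1, ⟨hg χ x, right_mem_segment ℝ _ _, hx.2.2⟩⟩
    have hiff : ∀ x ∈ inStar s φ, (hg φ x ∈ Qb s ↔ hg φ' x ∈ Qb s) := by
      intro x hx
      constructor <;> intro h
      · have := hgeq x (Or.inr hx) (Or.inl h)
        rwa [← this]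
      · have := hgeq x (Or.inr hx) (Or.inr h)
        rwa [this]
    constructor <;> intro h
    · refine Set.Subset.antisymm ?_ (hBsub φ')
      intro x hx
      have hx2 : x ∈ inStar s φ := hStar.symm ▸ hx
      have hx3 : x ∈ inB s φ := h ▸ hx2
      exact ⟨hx.1, hx.2.1, (hiff x hx2).mp hx3.2.2⟩
    · refine Set.Subset.antisymm ?_ (hBsub φ)
      intro x hx
      have hx2 : x ∈ inStar s φ' := hStar ▸ hx
      have hx3 : x ∈ inB s φ' := h ▸ hx2
      exact ⟨hx.1, hx.2.1, (hiff x hx).mpr hx3.2.2⟩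
  · -- (iii)
    ext x
    constructor <;> intro hx
    · have hxm : x ∈ φ ∩ QbM s := hQM ▸ (⟨hx.1, hx.2.1⟩ : x ∈ φ' ∩ QbM s)
      refine ⟨hxm.1, hxm.2, ?_⟩
      intro hcon
      have := hgeq x (Or.inl hxm) (Or.inl hcon)
      exact hx.2.2 (this ▸ hcon)
    · have hxm : x ∈ φ' ∩ QbM s := hQM ▸ (⟨hx.1, hx.2.1⟩ : x ∈ φ ∩ QbM s)
      refine ⟨hxm.1, hxm.2, ?_⟩
      intro hcon
      have := hgeq x (Or.inl ⟨hx.1, hx.2.1⟩) (Or.inr hcon)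
      exact hx.2.2 (this ▸ hcon)

end Lilypond
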